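/- Let A be a real n×m matrix with n < m satisfying the URP and having orthonormal rows (A Aᵀ = I_n), let 1 ≤ n0 ≤ n, γ = γ_A(n0) (finite and positive), and suppose s0 ∈ S_x has k = ‖s0‖₀ with 0 < k < n0/(2+2γ). Let ŝ = Aᵀx (the minimum Euclidean-norm element of S_x), σ₁ = ‖ŝ‖/√(k(1+γ)), c = 2m/(2m + n0/(2+2γ) − k) (so 0 < c < 1), and σ_j = σ₁·c^{j−1} for j ≥ 1. Let P denote the orthogonal projection of ℝ^m onto the null space of A. Suppose s₁ = ŝ, and for each j ≥ 2 there is a differentiable curve α_j : [0,∞) → ℝ^m with α_j(0) = s_{j−1}, α_j′(t) = P ∇F_{γ,σ_j}(α_j(t)) for all t ≥ 0, whose limit s_j = lim_{t→∞} α_j(t) exists. Then for every j ≥ 1, F_{γ,σ_j}(s_j) ≥ m − k and ‖s_j − s0‖ ≤ √(m(γ+1))·σ_j; in particular s_j → s0 as j → ∞. -/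

import Mathlib

open Finset
open scoped BigOperators

noncomputable section

/-- Squared Euclidean norm of a vector. -/
def nsq {ι : Type*} [Fintype ι] (s : ι → ℝ) : ℝ := ∑ i, (s i) ^ 2

/-- The Unique Representation Property: every `n × n` submatrix of `A` is invertible. -/
def URP {n m : ℕ} (A : Matrix (Fin n) (Fin m) ℝ) : Prop :=
  ∀ g : Fin n → Fin m, Function.Injective g → IsUnit (A.submatrix id g)

/-- Number of nonzero components (the ℓ⁰ "norm"). -/
def l0 {ι : Type*} [Fintype ι] (s : ι → ℝ) : ℕ :=
  (Finset.univ.filter fun i => s i ≠ 0).card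

/-- Number of components with absolute value greater than σ. -/
def l0s {ι : Type*} [Fintype ι] (s : ι → ℝ) (σ : ℝ) : ℕ :=
  (Finset.univ.filter fun i => σ < |s i|).card

/-- The set of ratios ‖π_I(s)‖²/‖π_{Iᶜ}(s)‖² over index sets `I` with `|I| ≤ n0`
and nonzero null-space vectors `s`. -/
def gammaSet {n m : ℕ} (A : Matrix (Fin n) (Fin m) ℝ) (n0 : ℕ) : Set ℝ :=
  {r | ∃ (I : Finset (Fin m)) (s : Fin m → ℝ), I.card ≤ n0 ∧ A.mulVec s = 0 ∧ s ≠ 0 ∧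
    r = (∑ i ∈ I, (s i) ^ 2) / (∑ i ∈ Iᶜ, (s i) ^ 2)}

/-- γ_A(n0), the supremum of the above set of ratios. -/
def gammaA {n m : ℕ} (A : Matrix (Fin n) (Fin m) ℝ) (n0 : ℕ) : ℝ :=
  sSup (gammaSet A n0)

/-- Square of the largest singular value of a matrix (Rayleigh quotient form). -/
def sMaxSq {p q : Type*} [Fintype p] [Fintype q] (B : Matrix p q ℝ) : ℝ :=
  sSup {r | ∃ v : q → ℝ, nsq v = 1 ∧ r = nsq (B.mulVec v)}

/-- Square of the smallest singular value of a matrix with at least as many rows as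
columns (Rayleigh quotient form). -/
def sMinSq {p q : Type*} [Fintype p] [Fintype q] (B : Matrix p q ℝ) : ℝ :=
  sInf {r | ∃ v : q → ℝ, nsq v = 1 ∧ r = nsq (B.mulVec v)}

/-- The quadratic spline f_γ. -/
def fsp (γ u : ℝ) : ℝ :=
  if |u| ≤ 1 then 1 - u ^ 2 / (1 + γ)
  else if |u| ≤ 1 + γ then (|u| - γ - 1) ^ 2 / (γ ^ 2 + γ)
  else 0

/-- F_{γ,σ}(s) = Σ_i f_γ(s_i/σ). -/
def Fsp {m : ℕ} (γ σ : ℝ) (s : Fin m → ℝ) : ℝ := ∑ i, fsp γ (s i / σ)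

/-- The piecewise second derivative g_γ of f_γ. -/
def gsp (γ u : ℝ) : ℝ :=
  if |u| ≤ 1 then -2 / (1 + γ)
  else if |u| ≤ 1 + γ then 2 / (γ ^ 2 + γ)
  else 0

/-- The derivative f_γ′. -/
def fspDeriv (γ u : ℝ) : ℝ :=
  if |u| ≤ 1 then -2 * u / (1 + γ)
  else if |u| ≤ 1 + γ then 2 * (|u| - γ - 1) / (γ ^ 2 + γ) * Real.sign u
  else 0

/-- The gradient of F_{γ,σ}: its i-th component is (1/σ)·f_γ′(s_i/σ). -/
def gradF {m : ℕ} (γ σ : ℝ) (s : Fin m → ℝ) : Fin m → ℝ :=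
  fun i => fspDeriv γ (s i / σ) / σ

/-- The lower asymmetric restricted isometry constant δ_k^{min} of `A`. -/
def aricMin {n m : ℕ} (A : Matrix (Fin n) (Fin m) ℝ) (k : ℕ) : ℝ :=
  sInf {δ : ℝ | 0 ≤ δ ∧ ∀ s : Fin m → ℝ, l0 s ≤ k → (1 - δ) * nsq s ≤ nsq (A.mulVec s)}

end

noncomputable section SL0Aux

open Filter Topology

private lemma onegpos {γ : ℝ} (hγ : 0 < γ) : (0:ℝ) < 1 + γ := by linarith

/-- clamp function -/
private def mcl (c u : ℝ) : ℝ := max (-c) (min c u)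

private lemma mcl_mono {c u v : ℝ} (h : u ≤ v) : mcl c u ≤ mcl c v :=
  max_le_max le_rfl (min_le_min le_rfl h)

private lemma mcl_lip {c u v : ℝ} (h : u ≤ v) : mcl c v - mcl c u ≤ v - u := by
  simp only [mcl, max_def, min_def]
  split_ifs <;> linarith

private lemma mcl_self {c u : ℝ} (h : |u| ≤ c) : mcl c u = u := by
  have h1 := abs_le.mp h
  simp only [mcl]
  rw [min_eq_right h1.2, max_eq_right h1.1]

private lemma mcl_hi {c u : ℝ} (hc : 0 ≤ c) (h : c ≤ u) : mcl c u = c := by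
  simp only [mcl]
  rw [min_eq_left h, max_eq_right (by linarith)]

private lemma mcl_lo {c u : ℝ} (hc : 0 ≤ c) (h : u ≤ -c) : mcl c u = -c := by
  simp only [mcl]
  rw [min_eq_right (by linarith), max_eq_left (by linarith)]

private lemma max0_split {c u : ℝ} (hc : 0 ≤ c) :
    max 0 (u - c) - max 0 (-u - c) = u - mcl c u := by
  rcases le_total u (-c) with h | h
  · rw [mcl_lo hc h, max_eq_left (by linarith), max_eq_right (by linarith)]; ring
  · rcases le_total u c with h2 | h2
    · rw [mcl_self (abs_le.mpr ⟨by linarith, h2⟩), max_eq_left (by linarith),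
        max_eq_left (by linarith)]; ring
    · rw [mcl_hi hc h2, max_eq_right (by linarith), max_eq_left (by linarith)]; ring

/-- closed form of fsp -/
private def fclosed (γ u : ℝ) : ℝ :=
  1 - u ^ 2 / (1 + γ) + ((max 0 (u - 1)) ^ 2 + (max 0 (-u - 1)) ^ 2) / γ -
    ((max 0 (u - (1 + γ))) ^ 2 + (max 0 (-u - (1 + γ))) ^ 2) / (γ * (1 + γ))

private lemma fsp_even (γ u : ℝ) : fsp γ (-u) = fsp γ u := by
  simp [fsp, abs_neg]

private lemma fsp_in {γ u : ℝ} (h : |u| ≤ 1) : fsp γ u = 1 - u ^ 2 / (1 + γ) := by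
  simp [fsp, h]

private lemma fsp_mid {γ u : ℝ} (hγ : 0 < γ) (h1 : 1 ≤ |u|) (h2 : |u| ≤ 1 + γ) :
    fsp γ u = (|u| - γ - 1) ^ 2 / (γ ^ 2 + γ) := by
  by_cases ha : |u| ≤ 1
  · have h1' : |u| = 1 := le_antisymm ha h1
    rw [fsp_in ha, h1']
    have hu2 : u ^ 2 = 1 := by rw [← sq_abs, h1']; ring
    rw [hu2]
    field_simp
    ring
  · unfold fsp
    rw [if_neg ha, if_pos h2]

private lemma fsp_out {γ u : ℝ} (hγ : 0 < γ) (h : 1 + γ ≤ |u|) : fsp γ u = 0 := by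
  by_cases hb : |u| ≤ 1 + γ
  · have hout : |u| = 1 + γ := le_antisymm hb h
    unfold fsp
    rw [if_neg (by rw [hout]; intro hcon; linarith), if_pos hb, hout]
    ring_nf
  · unfold fsp
    rw [if_neg (by intro hcon; push_neg at hb; linarith), if_neg hb]

private lemma fsp_eq_fclosed_nonneg {γ : ℝ} (hγ : 0 < γ) {u : ℝ} (hu : 0 ≤ u) :
    fsp γ u = fclosed γ u := by
  have habs : |u| = u := abs_of_nonneg hu
  have hm1 : max 0 (-u - 1) = 0 := max_eq_left (by linarith)
  have hm2 : max 0 (-u - (1 + γ)) = 0 := max_eq_left (by linarith)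
  unfold fclosed
  rw [hm1, hm2]
  rcases le_total u 1 with h1 | h1
  · rw [fsp_in (by rw [habs]; exact h1)]
    rw [max_eq_left (by linarith), max_eq_left (by linarith)]
    ring
  · rcases le_total u (1 + γ) with h2 | h2
    · rw [fsp_mid hγ (by rw [habs]; exact h1) (by rw [habs]; exact h2), habs,
        max_eq_right (by linarith), max_eq_left (by linarith)]
      field_simp
      ring
    · rw [fsp_out hγ (by rw [habs]; exact h2),
        max_eq_right (by linarith), max_eq_right (by linarith)]
      field_simp
      ring

private lemma fclosed_even (γ u : ℝ) : fclosed γ (-u) = fclosed γ u := by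
  unfold fclosed
  rw [neg_neg, neg_sq]
  ring

private lemma fsp_eq_fclosed {γ : ℝ} (hγ : 0 < γ) (u : ℝ) : fsp γ u = fclosed γ u := by
  rcases le_total 0 u with hu | hu
  · exact fsp_eq_fclosed_nonneg hγ hu
  · rw [← fsp_even, ← fclosed_even]
    exact fsp_eq_fclosed_nonneg hγ (by linarith)

/-- closed form of fspDeriv -/
private def dclosed (γ u : ℝ) : ℝ :=
  -2 * u / (1 + γ) + (2 / γ) * (u - mcl 1 u) - (2 / (γ * (1 + γ))) * (u - mcl (1 + γ) u)

private lemma fspDeriv_eq_dclosed {γ : ℝ} (hγ : 0 < γ) (u : ℝ) :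
    fspDeriv γ u = dclosed γ u := by
  unfold fspDeriv dclosed
  split_ifs with h1 h2
  · rw [mcl_self h1, mcl_self (le_trans h1 (by linarith))]
    ring
  · push_neg at h1
    rcases le_or_gt 0 u with hu | hu
    · have habs : |u| = u := abs_of_nonneg hu
      have hu1 : 1 < u := by rwa [habs] at h1
      rw [habs] at h2 ⊢
      rw [Real.sign_of_pos (by linarith), mcl_hi zero_le_one hu1.le,
        mcl_self (by rw [habs]; exact h2)]
      field_simp
      ring
    · have habs : |u| = -u := abs_of_neg hu
      have hu1 : u < -1 := by rw [habs] at h1; linarith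
      rw [habs] at h2 ⊢
      rw [Real.sign_of_neg hu, mcl_lo zero_le_one hu1.le,
        mcl_self (by rw [habs]; linarith)]
      field_simp
      ring
  · push_neg at h1 h2
    rcases le_or_gt 0 u with hu | hu
    · have habs : |u| = u := abs_of_nonneg hu
      rw [habs] at h1 h2
      rw [mcl_hi zero_le_one (by linarith), mcl_hi (by linarith) h2.le]
      field_simp
      ring
    · have habs : |u| = -u := abs_of_neg hu
      rw [habs] at h1 h2
      rw [mcl_lo zero_le_one (by linarith), mcl_lo (by linarith) (by linarith)]
      field_simp
      ring

end SL0Aux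
noncomputable section SL0Aux2

open Filter Topology

private lemma hasDerivAt_max0sq (a u : ℝ) :
    HasDerivAt (fun x : ℝ => (max 0 (x - a)) ^ 2) (2 * max 0 (u - a)) u := by
  rcases lt_trichotomy u a with h | h | h
  · have hev : (fun x : ℝ => (max 0 (x - a)) ^ 2) =ᶠ[𝓝 u] fun _ => (0:ℝ) := by
      filter_upwards [Iio_mem_nhds h] with x hx
      rw [max_eq_left (by simp at hx; linarith)]
      ring
    have := (hasDerivAt_const u (0:ℝ)).congr_of_eventuallyEq hev
    rwa [max_eq_left (by linarith), mul_zero]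
  · subst h
    rw [max_eq_left (by linarith), mul_zero]
    rw [hasDerivAt_iff_tendsto_slope]
    apply squeeze_zero_norm' (a := fun x => |x - u|)
    · filter_upwards [eventually_mem_nhdsWithin] with x (hx : x ≠ u)
      have hxu : x - u ≠ 0 := sub_ne_zero.mpr hx
      rw [slope_def_field]
      have hz : (0 ⊔ (u - u)) ^ 2 = (0:ℝ) := by norm_num
      rw [hz, sub_zero, Real.norm_eq_abs, abs_div, div_le_iff₀ (abs_pos.mpr hxu)]
      have h3 : (0:ℝ) ≤ (0 ⊔ (x - u)) ^ 2 := by positivity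
      have h2 : (0 ⊔ (x - u)) ^ 2 ≤ (x - u) ^ 2 := by
        rcases le_total (x - u) 0 with hh | hh
        · rw [sup_eq_left.mpr hh]; simpa using sq_nonneg (x - u)
        · rw [sup_eq_right.mpr hh]
      calc |(0 ⊔ (x - u)) ^ 2| = (0 ⊔ (x - u)) ^ 2 := abs_of_nonneg h3
        _ ≤ (x - u) ^ 2 := h2
        _ = |x - u| * |x - u| := by rw [sq, ← abs_mul_self (x - u), abs_mul]
    · have hcont : Continuous fun x : ℝ => |x - u| :=
        (continuous_id.sub continuous_const).abs
      have : Tendsto (fun x : ℝ => |x - u|) (𝓝 u) (𝓝 0) := by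
        simpa using hcont.tendsto u
      exact this.mono_left nhdsWithin_le_nhds
  · have hev : (fun x : ℝ => (max 0 (x - a)) ^ 2) =ᶠ[𝓝 u] fun x => (x - a) ^ 2 := by
      filter_upwards [Ioi_mem_nhds h] with x hx
      rw [max_eq_right (by simp at hx; linarith)]
    have hD : HasDerivAt (fun x : ℝ => (x - a) ^ 2) (2 * (u - a)) u := by
      simpa using (((hasDerivAt_id u).sub_const a).fun_pow 2)
    have := hD.congr_of_eventuallyEq hev
    rwa [max_eq_right (by linarith)]

private lemma hasDerivAt_max0sq_neg (a u : ℝ) :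
    HasDerivAt (fun x : ℝ => (max 0 (-x - a)) ^ 2) (-(2 * max 0 (-u - a))) u := by
  have h := (hasDerivAt_max0sq a (-u)).comp u (hasDerivAt_neg u)
  simp only [Function.comp_def] at h
  rw [show -(2 * max 0 (-u - a)) = 2 * max 0 (-u - a) * -1 by ring]
  exact h

private lemma hasDerivAt_fsp {γ : ℝ} (hγ : 0 < γ) (u : ℝ) :
    HasDerivAt (fsp γ) (fspDeriv γ u) u := by
  have hfe : fsp γ = fclosed γ := funext (fsp_eq_fclosed hγ)
  rw [hfe]
  have h1 : HasDerivAt (fun x : ℝ => x ^ 2) (2 * u) u := by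
    simpa using hasDerivAt_pow 2 u
  have H := (((hasDerivAt_const u (1:ℝ)).sub (h1.div_const (1 + γ))).add
      (((hasDerivAt_max0sq 1 u).add (hasDerivAt_max0sq_neg 1 u)).div_const γ)).sub
      (((hasDerivAt_max0sq (1 + γ) u).add (hasDerivAt_max0sq_neg (1 + γ) u)).div_const
        (γ * (1 + γ)))
  have hfu : (fun x : ℝ => 1 - x ^ 2 / (1 + γ) +
      ((max 0 (x - 1)) ^ 2 + (max 0 (-x - 1)) ^ 2) / γ -
      ((max 0 (x - (1 + γ))) ^ 2 + (max 0 (-x - (1 + γ))) ^ 2) / (γ * (1 + γ))) = fclosed γ :=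
    rfl
  replace H : HasDerivAt (fclosed γ) _ u := H
  convert H using 1
  rw [fspDeriv_eq_dclosed hγ]
  unfold dclosed
  rw [← max0_split (zero_le_one), ← max0_split (by linarith : (0:ℝ) ≤ 1 + γ)]
  field_simp
  ring

private lemma fsp_cont {γ : ℝ} (hγ : 0 < γ) : Continuous (fsp γ) := by
  have : Differentiable ℝ (fsp γ) := fun u => (hasDerivAt_fsp hγ u).differentiableAt
  exact this.continuous

private lemma fspDeriv_cont {γ : ℝ} (hγ : 0 < γ) : Continuous (fspDeriv γ) := by
  have hfe : fspDeriv γ = dclosed γ := funext (fspDeriv_eq_dclosed hγ)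
  rw [hfe]
  unfold dclosed
  have hm : ∀ c : ℝ, Continuous fun u : ℝ => mcl c u := fun c =>
    continuous_const.max (continuous_const.min continuous_id)
  exact (((continuous_const.mul continuous_id).div_const _).add
    (continuous_const.mul (continuous_id.sub (hm 1)))).sub
    (continuous_const.mul (continuous_id.sub (hm (1 + γ))))

end SL0Aux2
noncomputable section SL0Aux3

open Filter Topology

private lemma fsp_nonneg {γ : ℝ} (hγ : 0 < γ) (u : ℝ) : 0 ≤ fsp γ u := by
  unfold fsp
  split_ifs with h1 h2
  · rw [sub_nonneg, div_le_one (by linarith)]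
    nlinarith [sq_abs u, abs_nonneg u]
  · apply div_nonneg (sq_nonneg _)
    nlinarith
  · exact le_refl 0

private lemma fsp_le_one {γ : ℝ} (hγ : 0 < γ) (u : ℝ) : fsp γ u ≤ 1 := by
  unfold fsp
  split_ifs with h1 h2
  · have : 0 ≤ u ^ 2 / (1 + γ) := div_nonneg (sq_nonneg _) (by linarith)
    linarith
  · push_neg at h1
    rw [div_le_one (by nlinarith)]
    nlinarith
  · linarith

private lemma one_sub_fsp_le {γ : ℝ} (hγ : 0 < γ) (u : ℝ) :
    1 - fsp γ u ≤ u ^ 2 / (1 + γ) := by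
  unfold fsp
  split_ifs with h1 h2
  · linarith
  · push_neg at h1
    have hpos : (0:ℝ) < γ * (1 + γ) := by nlinarith
    have heq : u ^ 2 / (1 + γ) - (1 - (|u| - γ - 1) ^ 2 / (γ ^ 2 + γ)) =
        (γ * u ^ 2 + (|u| - γ - 1) ^ 2 - γ * (1 + γ)) / (γ * (1 + γ)) := by
      field_simp
      ring
    have hnum : 0 ≤ γ * u ^ 2 + (|u| - γ - 1) ^ 2 - γ * (1 + γ) := by
      nlinarith [mul_nonneg (by linarith : (0:ℝ) ≤ 1 + γ) (sq_nonneg (|u| - 1)), sq_abs u]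
    have := div_nonneg hnum hpos.le
    rw [← heq] at this
    linarith
  · push_neg at h1 h2
    rw [le_div_iff₀ (by linarith : (0:ℝ) < 1 + γ)]
    nlinarith [sq_abs u]

private lemma inv_le_one_sub_fsp {γ : ℝ} (hγ : 0 < γ) {u : ℝ} (h : 1 ≤ |u|) :
    1 / (1 + γ) ≤ 1 - fsp γ u := by
  unfold fsp
  split_ifs with h1 h2
  · have h1' : |u| = 1 := le_antisymm h1 h
    have hu2 : u ^ 2 = 1 := by rw [← sq_abs, h1']; ring
    rw [hu2]
    linarith
  · push_neg at h1
    have hpos : (0:ℝ) < γ * (1 + γ) := by nlinarith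
    have heq : 1 - (|u| - γ - 1) ^ 2 / (γ ^ 2 + γ) - 1 / (1 + γ) =
        (γ ^ 2 - (|u| - γ - 1) ^ 2) / (γ * (1 + γ)) := by
      field_simp
      ring
    have hnum : 0 ≤ γ ^ 2 - (|u| - γ - 1) ^ 2 := by nlinarith
    have := div_nonneg hnum hpos.le
    rw [← heq] at this
    linarith
  · rw [sub_zero, div_le_one (by linarith)]
    linarith

private lemma fsp_zero (γ : ℝ) : fsp γ 0 = 1 := by
  simp [fsp]

end SL0Aux3
noncomputable section SL0Aux4

open Filter Topology

set_option maxHeartbeats 1000000 in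
private lemma fsp_scale {γ c : ℝ} (hγ : 0 < γ) (hc0 : 0 < c) (hc1 : c ≤ 1) (u : ℝ) :
    c ^ 2 * (1 - fsp γ (u / c)) ≤ 1 - fsp γ u := by
  have hone : (0:ℝ) < 1 + γ := by linarith
  have habs : |u / c| = |u| / c := by rw [abs_div, abs_of_pos hc0]
  have ht0 : 0 ≤ |u| := abs_nonneg u
  have hmono : |u| ≤ |u| / c := by
    rw [le_div_iff₀ hc0]
    nlinarith
  by_cases H1 : |u| / c ≤ 1
  · have hu1 : |u| ≤ 1 := le_trans hmono H1
    rw [fsp_in (by rw [habs]; exact H1), fsp_in hu1]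
    apply le_of_eq
    field_simp
    ring
  · push_neg at H1
    have hucge : 1 ≤ |u / c| := by rw [habs]; linarith
    by_cases H2 : |u| / c ≤ 1 + γ
    · rw [fsp_mid hγ hucge (by rw [habs]; exact H2), habs]
      by_cases H3 : |u| ≤ 1
      · rw [fsp_in H3]
        have heq : u ^ 2 / (1 + γ) - c ^ 2 * (1 - (|u| / c - γ - 1) ^ 2 / (γ ^ 2 + γ)) =
            (γ * |u| ^ 2 + (|u| - c * (γ + 1)) ^ 2 - c ^ 2 * γ * (1 + γ)) / (γ * (1 + γ)) := by
          rw [← sq_abs u]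
          field_simp
          ring
        have hnum : 0 ≤ γ * |u| ^ 2 + (|u| - c * (γ + 1)) ^ 2 - c ^ 2 * γ * (1 + γ) := by
          nlinarith [mul_nonneg hone.le (sq_nonneg (|u| - c))]
        have := div_nonneg hnum (by positivity : (0:ℝ) ≤ γ * (1 + γ))
        rw [← heq] at this
        linarith
      · push_neg at H3
        have hu2 : |u| ≤ 1 + γ := le_trans hmono H2
        rw [fsp_mid hγ H3.le hu2]
        have heq : 1 - (|u| - γ - 1) ^ 2 / (γ ^ 2 + γ) -
            c ^ 2 * (1 - (|u| / c - γ - 1) ^ 2 / (γ ^ 2 + γ)) =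
            (γ * (1 + γ) * (1 - c ^ 2) + (|u| - c * (1 + γ)) ^ 2 - (|u| - γ - 1) ^ 2) /
              (γ * (1 + γ)) := by
          field_simp
          ring
        have hnum : 0 ≤ γ * (1 + γ) * (1 - c ^ 2) + (|u| - c * (1 + γ)) ^ 2 -
            (|u| - γ - 1) ^ 2 := by
          nlinarith [mul_nonneg (mul_nonneg (by linarith : (0:ℝ) ≤ 1 - c) hone.le)
            (by linarith : (0:ℝ) ≤ 2 * |u| - 1 - c)]
        have := div_nonneg hnum (by positivity : (0:ℝ) ≤ γ * (1 + γ))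
        rw [← heq] at this
        linarith
    · push_neg at H2
      rw [fsp_out hγ (by rw [habs]; linarith)]
      have hct : c * (1 + γ) < |u| := by
        rw [lt_div_iff₀ hc0] at H2
        linarith [H2]
      by_cases H3 : |u| ≤ 1
      · rw [fsp_in H3]
        have hsq : (c * (1 + γ)) ^ 2 < |u| ^ 2 := by
          nlinarith [mul_pos hc0 hone]
        rw [sub_zero, mul_one,
          show (1:ℝ) - (1 - u ^ 2 / (1 + γ)) = u ^ 2 / (1 + γ) from by ring,
          le_div_iff₀ hone, ← sq_abs u]
        nlinarith [sq_nonneg c]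
      · push_neg at H3
        by_cases H4 : |u| ≤ 1 + γ
        · rw [fsp_mid hγ H3.le H4]
          have k1 : (1 + γ) * (1 + γ - |u|) ^ 2 ≤ γ * ((1 + γ) ^ 2 - |u| ^ 2) := by
            have hs0 : (0:ℝ) ≤ 1 + γ - |u| := by linarith
            have hsg : 1 + γ - |u| ≤ γ := by linarith
            nlinarith [mul_nonneg hs0
              (by nlinarith : (0:ℝ) ≤ 2 * γ * (1 + γ) - (1 + γ - |u|) * (1 + 2 * γ))]
          have k2 : (1 + γ) ^ 2 * c ^ 2 ≤ |u| ^ 2 := by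
            nlinarith [mul_nonneg (sub_nonneg.mpr hct.le)
              (by positivity : (0:ℝ) ≤ |u| + c * (1 + γ))]
          have k2' : γ * ((1 + γ) ^ 2 * c ^ 2) ≤ γ * |u| ^ 2 :=
            mul_le_mul_of_nonneg_left k2 hγ.le
          have key3' : (1 + γ) * ((|u| - γ - 1) ^ 2) ≤ (1 + γ) * (γ * (1 + γ) * (1 - c ^ 2)) := by
            nlinarith [k1, k2']
          have key3 : (|u| - γ - 1) ^ 2 ≤ γ * (1 + γ) * (1 - c ^ 2) :=
            le_of_mul_le_mul_left key3' hone
          have hpos : (0:ℝ) < γ ^ 2 + γ := add_pos (pow_pos hγ 2) hγ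
          have heq : 1 - (|u| - γ - 1) ^ 2 / (γ ^ 2 + γ) - c ^ 2 * (1 - 0) =
              ((γ ^ 2 + γ) * (1 - c ^ 2) - (|u| - γ - 1) ^ 2) / (γ ^ 2 + γ) := by
            field_simp
            ring
          have e2 : (γ ^ 2 + γ) * (1 - c ^ 2) = γ * (1 + γ) * (1 - c ^ 2) := by ring
          have hnum : 0 ≤ (γ ^ 2 + γ) * (1 - c ^ 2) - (|u| - γ - 1) ^ 2 := by
            rw [e2]
            linarith [key3]
          have := div_nonneg hnum hpos.le
          rw [← heq] at this
          linarith
        · push_neg at H4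
          rw [fsp_out hγ H4.le]
          nlinarith [hc0, hc1]

private lemma sum_one_sub_eq {m : ℕ} (γ σ : ℝ) (z : Fin m → ℝ) :
    ∑ i, (1 - fsp γ (z i / σ)) = (m : ℝ) - Fsp γ σ z := by
  rw [Finset.sum_sub_distrib]
  simp [Fsp]

private lemma Fsp_scale {m : ℕ} {γ c : ℝ} (hγ : 0 < γ) (hc0 : 0 < c) (hc1 : c ≤ 1)
    (σ : ℝ) (hσ : 0 < σ) (z : Fin m → ℝ) :
    (m : ℝ) - Fsp γ (c * σ) z ≤ ((m : ℝ) - Fsp γ σ z) / c ^ 2 := by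
  rw [← sum_one_sub_eq, ← sum_one_sub_eq, le_div_iff₀ (by positivity), Finset.sum_mul]
  apply Finset.sum_le_sum
  intro i _
  have harg : (z i / σ) / c = z i / (c * σ) := by
    rw [div_div, mul_comm σ c]
  rw [← harg, mul_comm]
  exact fsp_scale hγ hc0 hc1 _

private lemma defect_le_nsq {m : ℕ} {γ : ℝ} (hγ : 0 < γ) {σ : ℝ} (hσ : 0 < σ)
    (z : Fin m → ℝ) : (m : ℝ) - Fsp γ σ z ≤ nsq z / (σ ^ 2 * (1 + γ)) := by
  rw [← sum_one_sub_eq]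
  unfold nsq
  rw [Finset.sum_div]
  apply Finset.sum_le_sum
  intro i _
  have h := one_sub_fsp_le hγ (z i / σ)
  calc 1 - fsp γ (z i / σ) ≤ (z i / σ) ^ 2 / (1 + γ) := h
    _ = z i ^ 2 / (σ ^ 2 * (1 + γ)) := by rw [div_pow, div_div]

private lemma count_ge {m : ℕ} {γ : ℝ} (hγ : 0 < γ) {σ : ℝ} (hσ : 0 < σ) (z : Fin m → ℝ) :
    ((Finset.univ.filter fun i => σ ≤ |z i|).card : ℝ) ≤ (1 + γ) * ((m : ℝ) - Fsp γ σ z) := by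
  have hone : (0:ℝ) < 1 + γ := by linarith
  have h1 : ∀ i ∈ Finset.univ.filter fun i => σ ≤ |z i|,
      1 / (1 + γ) ≤ 1 - fsp γ (z i / σ) := by
    intro i hi
    rw [Finset.mem_filter] at hi
    apply inv_le_one_sub_fsp hγ
    rw [abs_div, abs_of_pos hσ, le_div_iff₀ hσ, one_mul]
    exact hi.2
  have h2 := Finset.card_nsmul_le_sum _ _ _ h1
  rw [nsmul_eq_mul] at h2
  have h3 : ∑ i ∈ Finset.univ.filter fun i => σ ≤ |z i|, (1 - fsp γ (z i / σ)) ≤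
      ∑ i, (1 - fsp γ (z i / σ)) := by
    apply Finset.sum_le_sum_of_subset_of_nonneg (Finset.subset_univ _)
    intro i _ _
    linarith [fsp_le_one hγ (z i / σ)]
  rw [sum_one_sub_eq] at h3
  have h4 := le_trans h2 h3
  calc ((Finset.univ.filter fun i => σ ≤ |z i|).card : ℝ)
      = (1 + γ) * (((Finset.univ.filter fun i => σ ≤ |z i|).card : ℝ) * (1 / (1 + γ))) := by
        field_simp
    _ ≤ (1 + γ) * ((m : ℝ) - Fsp γ σ z) := by
        apply mul_le_mul_of_nonneg_left h4 hone.le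

private lemma fspDeriv_pair_main {γ : ℝ} (hγ : 0 < γ) {p q : ℝ} (h : p ≤ q) :
    (fspDeriv γ q - fspDeriv γ p) * (q - p) ≤ (2 / γ - 2 / (1 + γ)) * (q - p) ^ 2 := by
  have hone : (0:ℝ) < 1 + γ := by linarith
  rw [fspDeriv_eq_dclosed hγ p, fspDeriv_eq_dclosed hγ q]
  have d1a : 0 ≤ (q - mcl 1 q) - (p - mcl 1 p) := by
    have := mcl_lip (c := 1) h
    linarith
  have d1b : (q - mcl 1 q) - (p - mcl 1 p) ≤ q - p := by
    have := mcl_mono (c := 1) h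
    linarith
  have d2a : 0 ≤ (q - mcl (1 + γ) q) - (p - mcl (1 + γ) p) := by
    have := mcl_lip (c := 1 + γ) h
    linarith
  have hqp : 0 ≤ q - p := by linarith
  have X1 : ((q - mcl 1 q) - (p - mcl 1 p)) * (q - p) ≤ (q - p) ^ 2 := by
    nlinarith [mul_le_mul_of_nonneg_right d1b hqp]
  have X2 : 0 ≤ ((q - mcl (1 + γ) q) - (p - mcl (1 + γ) p)) * (q - p) :=
    mul_nonneg d2a hqp
  have e1 : (2 / γ) * (((q - mcl 1 q) - (p - mcl 1 p)) * (q - p)) ≤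
      (2 / γ) * ((q - p) ^ 2) := by
    apply mul_le_mul_of_nonneg_left X1 (by positivity)
  have e2 : 0 ≤ (2 / (γ * (1 + γ))) * (((q - mcl (1 + γ) q) - (p - mcl (1 + γ) p)) * (q - p)) :=
    mul_nonneg (by positivity) X2
  have eq1 : (dclosed γ q - dclosed γ p) * (q - p) =
      -2 * (q - p) ^ 2 / (1 + γ) + (2 / γ) * (((q - mcl 1 q) - (p - mcl 1 p)) * (q - p)) -
        (2 / (γ * (1 + γ))) * (((q - mcl (1 + γ) q) - (p - mcl (1 + γ) p)) * (q - p)) := by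
    unfold dclosed
    field_simp
    ring
  have eq2 : (2 / γ - 2 / (1 + γ)) * (q - p) ^ 2 =
      -2 * (q - p) ^ 2 / (1 + γ) + (2 / γ) * ((q - p) ^ 2) := by
    field_simp
    ring
  rw [eq1, eq2]
  linarith

private lemma fspDeriv_pair_le {γ : ℝ} (hγ : 0 < γ) (p q : ℝ) :
    (fspDeriv γ q - fspDeriv γ p) * (q - p) ≤ (2 / γ - 2 / (1 + γ)) * (q - p) ^ 2 := by
  rcases le_total p q with h | h
  · exact fspDeriv_pair_main hγ h
  · have := fspDeriv_pair_main hγ h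
    have e1 : (fspDeriv γ q - fspDeriv γ p) * (q - p) =
        (fspDeriv γ p - fspDeriv γ q) * (p - q) := by ring
    have e2 : (q - p) ^ 2 = (p - q) ^ 2 := by ring
    rw [e1, e2]
    exact this

private lemma fspDeriv_pair_small {γ : ℝ} (hγ : 0 < γ) {p q : ℝ} (hp : |p| ≤ 1)
    (hq : |q| ≤ 1) :
    (fspDeriv γ q - fspDeriv γ p) * (q - p) ≤ -(2 / (1 + γ)) * (q - p) ^ 2 := by
  unfold fspDeriv
  rw [if_pos hp, if_pos hq]
  apply le_of_eq
  ring

end SL0Aux4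
noncomputable section SL0Aux5

open Filter Topology

private lemma nsq_nonneg {ι : Type*} [Fintype ι] (z : ι → ℝ) : 0 ≤ nsq z :=
  Finset.sum_nonneg fun i _ => sq_nonneg _

private lemma nsq_eq_zero {ι : Type*} [Fintype ι] {z : ι → ℝ} (h : nsq z = 0) : z = 0 := by
  have := (Finset.sum_eq_zero_iff_of_nonneg (fun i _ => sq_nonneg (z i))).mp h
  funext i
  have := this i (Finset.mem_univ i)
  exact pow_eq_zero_iff (by norm_num) |>.mp this

private lemma nsq_pos {ι : Type*} [Fintype ι] {z : ι → ℝ} (h : z ≠ 0) : 0 < nsq z := by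
  rcases lt_or_eq_of_le (nsq_nonneg z) with h1 | h1
  · exact h1
  · exact absurd (nsq_eq_zero h1.symm) h

private lemma comp_le_nsq {ι : Type*} [Fintype ι] (z : ι → ℝ) (i : ι) :
    z i ^ 2 ≤ nsq z :=
  Finset.single_le_sum (fun j _ => sq_nonneg (z j)) (Finset.mem_univ i)

private lemma abs_comp_le_sqrt_nsq {ι : Type*} [Fintype ι] (z : ι → ℝ) (i : ι) :
    |z i| ≤ Real.sqrt (nsq z) := by
  rw [← Real.sqrt_sq_eq_abs]
  exact Real.sqrt_le_sqrt (comp_le_nsq z i)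

/-- URP implies that null vectors supported on at most n coordinates vanish. -/
private lemma urp_null {n m : ℕ} {A : Matrix (Fin n) (Fin m) ℝ} (hURP : URP A)
    (hnm : n ≤ m) {w : Fin m → ℝ} (hw : A.mulVec w = 0)
    (hcard : (Finset.univ.filter fun i => w i ≠ 0).card ≤ n) : w = 0 := by
  obtain ⟨J, hJsub, hJcard⟩ := Finset.exists_superset_card_eq hcard
    (by simpa using hnm)
  set e := J.orderIsoOfFin hJcard with he
  set g : Fin n → Fin m := fun i => (e i : Fin m) with hg
  have hginj : Function.Injective g := fun a b hab => by
    apply e.injective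
    exact Subtype.ext hab
  have hrange : ∀ l : Fin m, l ∉ J → w l = 0 := by
    intro l hl
    by_contra hne
    exact hl (hJsub (Finset.mem_filter.mpr ⟨Finset.mem_univ l, hne⟩))
  have hsum : (A.submatrix id g).mulVec (w ∘ g) = 0 := by
    funext r
    have h1 : (A.submatrix id g).mulVec (w ∘ g) r = ∑ j : Fin n, A r (g j) * w (g j) := by
      simp [Matrix.mulVec, dotProduct, Matrix.submatrix, Function.comp]
    have himg : Finset.image g Finset.univ = J := by
      apply Finset.eq_of_subset_of_card_le
      · intro l hl
        obtain ⟨j, _, rfl⟩ := Finset.mem_image.mp hl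
        exact (e j).2
      · rw [Finset.card_image_of_injective _ hginj, Finset.card_univ, Fintype.card_fin,
          hJcard]
    have h2 : ∑ j : Fin n, A r (g j) * w (g j) = ∑ l ∈ J, A r l * w l := by
      rw [← himg, Finset.sum_image (fun a _ b _ hab => hginj hab)]
    have h3 : ∑ l ∈ J, A r l * w l = ∑ l : Fin m, A r l * w l := by
      apply Finset.sum_subset (Finset.subset_univ J)
      intro l _ hl
      rw [hrange l hl, mul_zero]
    have h4 : ∑ l : Fin m, A r l * w l = 0 := by
      have := congrFun hw r
      simpa [Matrix.mulVec, dotProduct] using this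
    rw [h1, h2, h3, h4]
    rfl
  obtain ⟨u, hu⟩ := hURP g hginj
  have hwg : w ∘ g = 0 := by
    set N : Matrix (Fin n) (Fin n) ℝ := ↑u⁻¹ with hN
    have hinv : N * A.submatrix id g = 1 := by
      rw [hN, ← hu]
      exact u.inv_mul
    calc w ∘ g = (N * A.submatrix id g).mulVec (w ∘ g) := by
          rw [hinv, Matrix.one_mulVec]
      _ = N.mulVec ((A.submatrix id g).mulVec (w ∘ g)) := by
          rw [Matrix.mulVec_mulVec]
      _ = 0 := by rw [hsum, Matrix.mulVec_zero]
  funext l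
  by_cases hl : l ∈ J
  · have : g (e.symm ⟨l, hl⟩) = l := by simp [hg]
    rw [← this]
    exact congrFun hwg _
  · exact hrange l hl

end SL0Aux5
noncomputable section SL0Aux6

open Filter Topology

private lemma Fsp_le_m {m : ℕ} {γ : ℝ} (hγ : 0 < γ) (σ : ℝ) (z : Fin m → ℝ) :
    Fsp γ σ z ≤ (m : ℝ) := by
  unfold Fsp
  calc ∑ i, fsp γ (z i / σ) ≤ ∑ _i : Fin m, (1:ℝ) :=
        Finset.sum_le_sum fun i _ => fsp_le_one hγ _
    _ = (m : ℝ) := by simp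

private lemma Fsp_s0_ge {m k : ℕ} {γ : ℝ} (hγ : 0 < γ) (σ : ℝ) {s0 : Fin m → ℝ}
    (hk : k = l0 s0) : (m : ℝ) - k ≤ Fsp γ σ s0 := by
  classical
  set T := Finset.univ.filter fun i => s0 i ≠ 0 with hT
  have hTcard : T.card = k := by rw [hk]; rfl
  have h1 : ∀ i ∈ Tᶜ, fsp γ (s0 i / σ) = 1 := by
    intro i hi
    rw [Finset.mem_compl, hT, Finset.mem_filter] at hi
    push_neg at hi
    have : s0 i = 0 := by
      by_contra hne
      exact hne (hi (Finset.mem_univ i))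
    rw [this, zero_div, fsp_zero]
  have hsplit : Fsp γ σ s0 = ∑ i ∈ T, fsp γ (s0 i / σ) + ∑ i ∈ Tᶜ, fsp γ (s0 i / σ) := by
    unfold Fsp
    rw [Finset.sum_add_sum_compl]
  have h2 : ∑ i ∈ Tᶜ, fsp γ (s0 i / σ) = ((m - k : ℕ) : ℝ) := by
    rw [Finset.sum_congr rfl h1]
    simp [Finset.card_compl, hTcard]
  have h3 : 0 ≤ ∑ i ∈ T, fsp γ (s0 i / σ) :=
    Finset.sum_nonneg fun i _ => fsp_nonneg hγ _
  have hkm : k ≤ m := by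
    rw [← hTcard]
    calc T.card ≤ Finset.univ.card := Finset.card_le_univ T
      _ = m := by simp
  rw [hsplit, h2]
  rw [Nat.cast_sub hkm]
  linarith

/-- The γ-inequality for null vectors and small index sets. -/
private lemma gamma_bound {n m n0 : ℕ} {A : Matrix (Fin n) (Fin m) ℝ} {γ : ℝ}
    (hURP : URP A) (hγdef : γ = gammaA A n0) (hbdd : BddAbove (gammaSet A n0))
    (hn0n : n0 ≤ n) (hnm : n ≤ m)
    {w : Fin m → ℝ} (hw : A.mulVec w = 0) (I : Finset (Fin m)) (hI : I.card ≤ n0) :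
    ∑ i ∈ I, (w i) ^ 2 ≤ γ * ∑ i ∈ Iᶜ, (w i) ^ 2 := by
  by_cases hw0 : w = 0
  · simp [hw0]
  · have hden : 0 < ∑ i ∈ Iᶜ, (w i) ^ 2 := by
      rcases lt_or_eq_of_le (Finset.sum_nonneg fun i (_ : i ∈ Iᶜ) => sq_nonneg (w i))
        with h | h
      · exact h
      · exfalso
        have hz : ∀ i ∈ Iᶜ, w i = 0 := by
          intro i hi
          have := (Finset.sum_eq_zero_iff_of_nonneg
            (fun i (_ : i ∈ Iᶜ) => sq_nonneg (w i))).mp h.symm i hi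
          exact pow_eq_zero_iff (by norm_num) |>.mp this
        apply hw0
        apply urp_null hURP hnm hw
        calc (Finset.univ.filter fun i => w i ≠ 0).card ≤ I.card := by
              apply Finset.card_le_card
              intro i hi
              rw [Finset.mem_filter] at hi
              by_contra hni
              exact hi.2 (hz i (Finset.mem_compl.mpr hni))
          _ ≤ n0 := hI
          _ ≤ n := hn0n
    have hmem : (∑ i ∈ I, (w i) ^ 2) / (∑ i ∈ Iᶜ, (w i) ^ 2) ∈ gammaSet A n0 :=
      ⟨I, w, hI, hw, hw0, rfl⟩
    have hle := le_csSup hbdd hmem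
    rw [← gammaA, ← hγdef] at hle
    rw [div_le_iff₀ hden] at hle
    linarith [hle]

end SL0Aux6
noncomputable section SL0Aux7

open Filter Topology

/-- Ball lemma: a feasible point with small defect is close to s0. -/
private lemma ball_bound {n m n0 k : ℕ} {A : Matrix (Fin n) (Fin m) ℝ} {γ : ℝ}
    (hURP : URP A) (hγdef : γ = gammaA A n0) (hγpos : 0 < γ)
    (hbdd : BddAbove (gammaSet A n0)) (hn0n : n0 ≤ n) (hnm : n ≤ m)
    {x : Fin n → ℝ} {s0 : Fin m → ℝ} (hs0x : A.mulVec s0 = x) (hk : k = l0 s0)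
    {σ : ℝ} (hσ : 0 < σ) {sv : Fin m → ℝ} (hsv : A.mulVec sv = x)
    {β : ℝ} (hF : (m : ℝ) - Fsp γ σ sv ≤ β)
    (hcount : (k : ℝ) + (1 + γ) * β ≤ (n0 : ℝ)) :
    nsq (sv - s0) ≤ (m : ℝ) * (1 + γ) * σ ^ 2 := by
  classical
  set T := Finset.univ.filter fun i => s0 i ≠ 0 with hT
  set B := Finset.univ.filter fun i => σ ≤ |sv i| with hB
  set J := T ∪ B with hJ
  have hTcard : (T.card : ℝ) = k := by rw [hk]; rfl
  have hBcard : (B.card : ℝ) ≤ (1 + γ) * ((m : ℝ) - Fsp γ σ sv) := count_ge hγpos hσ sv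
  have hJcardR : (J.card : ℝ) ≤ (n0 : ℝ) := by
    have h1 : (J.card : ℝ) ≤ (T.card : ℝ) + (B.card : ℝ) := by
      have := Finset.card_union_le T B
      exact_mod_cast this
    have h2 : (1 + γ) * ((m : ℝ) - Fsp γ σ sv) ≤ (1 + γ) * β :=
      mul_le_mul_of_nonneg_left hF (by linarith)
    calc (J.card : ℝ) ≤ (T.card : ℝ) + (B.card : ℝ) := h1
      _ ≤ (k : ℝ) + (1 + γ) * β := by rw [hTcard]; linarith
      _ ≤ (n0 : ℝ) := hcount
  have hJcard : J.card ≤ n0 := by exact_mod_cast hJcardR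
  have hnull : A.mulVec (sv - s0) = 0 := by
    rw [Matrix.mulVec_sub, hsv, hs0x, sub_self]
  have hγineq := gamma_bound hURP hγdef hbdd hn0n hnm hnull J hJcard
  have hcomp : ∑ i ∈ Jᶜ, ((sv - s0) i) ^ 2 ≤ (m : ℝ) * σ ^ 2 := by
    have h1 : ∀ i ∈ Jᶜ, ((sv - s0) i) ^ 2 ≤ σ ^ 2 := by
      intro i hi
      rw [Finset.mem_compl, hJ, Finset.mem_union] at hi
      push_neg at hi
      have hs0i : s0 i = 0 := by
        have := hi.1
        rw [hT, Finset.mem_filter] at this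
        push_neg at this
        by_contra hne
        exact hne (this (Finset.mem_univ i))
      have hsvi : |sv i| < σ := by
        have := hi.2
        rw [hB, Finset.mem_filter] at this
        push_neg at this
        exact this (Finset.mem_univ i)
      have : |(sv - s0) i| ≤ σ := by
        simp only [Pi.sub_apply, hs0i, sub_zero]
        linarith
      calc ((sv - s0) i) ^ 2 = |(sv - s0) i| ^ 2 := (sq_abs _).symm
        _ ≤ σ ^ 2 := by nlinarith [abs_nonneg ((sv - s0) i)]
    calc ∑ i ∈ Jᶜ, ((sv - s0) i) ^ 2 ≤ (Jᶜ.card : ℝ) * σ ^ 2 := by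
          have := Finset.sum_le_card_nsmul Jᶜ _ (σ ^ 2) h1
          rwa [nsmul_eq_mul] at this
      _ ≤ (m : ℝ) * σ ^ 2 := by
          apply mul_le_mul_of_nonneg_right _ (sq_nonneg σ)
          have : Jᶜ.card ≤ m := by
            calc Jᶜ.card ≤ Finset.univ.card := Finset.card_le_univ _
              _ = m := by simp
          exact_mod_cast this
  have hsum : nsq (sv - s0) = ∑ i ∈ J, ((sv - s0) i) ^ 2 + ∑ i ∈ Jᶜ, ((sv - s0) i) ^ 2 := by
    unfold nsq
    rw [Finset.sum_add_sum_compl]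
  calc nsq (sv - s0) = ∑ i ∈ J, ((sv - s0) i) ^ 2 + ∑ i ∈ Jᶜ, ((sv - s0) i) ^ 2 := hsum
    _ ≤ γ * ∑ i ∈ Jᶜ, ((sv - s0) i) ^ 2 + ∑ i ∈ Jᶜ, ((sv - s0) i) ^ 2 := by linarith
    _ = (1 + γ) * ∑ i ∈ Jᶜ, ((sv - s0) i) ^ 2 := by ring
    _ ≤ (1 + γ) * ((m : ℝ) * σ ^ 2) := mul_le_mul_of_nonneg_left hcomp (by linarith)
    _ = (m : ℝ) * (1 + γ) * σ ^ 2 := by ring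

end SL0Aux7
noncomputable section SL0Aux8

open Filter Topology

private lemma sum_deriv_diff_le {m : ℕ} {γ σ : ℝ} (hγ : 0 < γ) (hσ : 0 < σ)
    (y v : Fin m → ℝ) (J : Finset (Fin m))
    (hJ : ∑ i ∈ J, (v i) ^ 2 ≤ γ * ∑ i ∈ Jᶜ, (v i) ^ 2)
    {a b : ℝ} (hab : a ≤ b)
    (hsmall : ∀ i ∉ J, ∀ τ, a ≤ τ → τ ≤ b → |(y i + τ * v i) / σ| ≤ 1) :
    ∑ i, fspDeriv γ ((y i + b * v i) / σ) * (v i / σ) ≤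
      ∑ i, fspDeriv γ ((y i + a * v i) / σ) * (v i / σ) := by
  rcases eq_or_lt_of_le hab with rfl | hlt
  · exact le_refl _
  have hone : (0:ℝ) < 1 + γ := by linarith
  set Bv : Fin m → ℝ := fun i => (y i + b * v i) / σ with hBv
  set Av : Fin m → ℝ := fun i => (y i + a * v i) / σ with hAv
  have hBA : ∀ i, Bv i - Av i = (b - a) * (v i / σ) := by
    intro i
    rw [hBv, hAv]
    field_simp
    ring
  have hsq : ∀ i, (Bv i - Av i) ^ 2 = ((b - a) / σ) ^ 2 * (v i) ^ 2 := by
    intro i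
    rw [hBA i]
    field_simp
  have hsum2 : ∑ i ∈ J, (Bv i - Av i) ^ 2 ≤ γ * ∑ i ∈ Jᶜ, (Bv i - Av i) ^ 2 := by
    calc ∑ i ∈ J, (Bv i - Av i) ^ 2 = ((b - a) / σ) ^ 2 * ∑ i ∈ J, (v i) ^ 2 := by
          rw [Finset.mul_sum]
          exact Finset.sum_congr rfl fun i _ => hsq i
      _ ≤ ((b - a) / σ) ^ 2 * (γ * ∑ i ∈ Jᶜ, (v i) ^ 2) :=
          mul_le_mul_of_nonneg_left hJ (sq_nonneg _)
      _ = γ * (((b - a) / σ) ^ 2 * ∑ i ∈ Jᶜ, (v i) ^ 2) := by ring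
      _ = γ * ∑ i ∈ Jᶜ, (Bv i - Av i) ^ 2 := by
          congr 1
          rw [Finset.mul_sum]
          exact Finset.sum_congr rfl fun i _ => (hsq i).symm
  have key : ∑ i, (fspDeriv γ (Bv i) - fspDeriv γ (Av i)) * (Bv i - Av i) ≤ 0 := by
    rw [← Finset.sum_add_sum_compl J]
    have b1 : ∑ i ∈ J, (fspDeriv γ (Bv i) - fspDeriv γ (Av i)) * (Bv i - Av i) ≤
        (2 / γ - 2 / (1 + γ)) * ∑ i ∈ J, (Bv i - Av i) ^ 2 := by
      rw [Finset.mul_sum]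
      exact Finset.sum_le_sum fun i _ => fspDeriv_pair_le hγ (Av i) (Bv i)
    have b2 : ∑ i ∈ Jᶜ, (fspDeriv γ (Bv i) - fspDeriv γ (Av i)) * (Bv i - Av i) ≤
        -(2 / (1 + γ)) * ∑ i ∈ Jᶜ, (Bv i - Av i) ^ 2 := by
      rw [Finset.mul_sum]
      apply Finset.sum_le_sum
      intro i hi
      have hiJ : i ∉ J := Finset.mem_compl.mp hi
      exact fspDeriv_pair_small hγ (hsmall i hiJ a le_rfl hab) (hsmall i hiJ b hab le_rfl)
    have hCpos : 0 ≤ 2 / γ - 2 / (1 + γ) := by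
      have h1 : 2 / (1 + γ) ≤ 2 / γ := by
        rw [div_le_div_iff₀ hone hγ]
        nlinarith
      linarith
    have b3 : (2 / γ - 2 / (1 + γ)) * ∑ i ∈ J, (Bv i - Av i) ^ 2 ≤
        (2 / γ - 2 / (1 + γ)) * (γ * ∑ i ∈ Jᶜ, (Bv i - Av i) ^ 2) :=
      mul_le_mul_of_nonneg_left hsum2 hCpos
    have b4 : (2 / γ - 2 / (1 + γ)) * γ = 2 / (1 + γ) := by
      field_simp
      ring
    have b5 : (2 / γ - 2 / (1 + γ)) * (γ * ∑ i ∈ Jᶜ, (Bv i - Av i) ^ 2) =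
        (2 / (1 + γ)) * ∑ i ∈ Jᶜ, (Bv i - Av i) ^ 2 := by
      rw [← mul_assoc, b4]
    linarith [b1, b2, b3]
  have hmain : ∑ i, (fspDeriv γ (Bv i) - fspDeriv γ (Av i)) * (v i / σ) ≤ 0 := by
    have hexp : (b - a) * ∑ i, (fspDeriv γ (Bv i) - fspDeriv γ (Av i)) * (v i / σ) =
        ∑ i, (fspDeriv γ (Bv i) - fspDeriv γ (Av i)) * (Bv i - Av i) := by
      rw [Finset.mul_sum]
      apply Finset.sum_congr rfl
      intro i _
      rw [hBA i]
      ring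
    by_contra hcon
    push_neg at hcon
    nlinarith [key, hexp, mul_pos (sub_pos.mpr hlt) hcon]
  have hfin : ∑ i, fspDeriv γ (Bv i) * (v i / σ) - ∑ i, fspDeriv γ (Av i) * (v i / σ) ≤ 0 := by
    rw [← Finset.sum_sub_distrib]
    calc ∑ i, (fspDeriv γ (Bv i) * (v i / σ) - fspDeriv γ (Av i) * (v i / σ))
        = ∑ i, (fspDeriv γ (Bv i) - fspDeriv γ (Av i)) * (v i / σ) :=
          Finset.sum_congr rfl fun i _ => by ring
      _ ≤ 0 := hmain
  linarith [hfin]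

/-- Stationarity and regional concavity imply the stationary point dominates y+v. -/
private lemma stationary_ge {m : ℕ} {γ σ : ℝ} (hγ : 0 < γ) (hσ : 0 < σ)
    (y v : Fin m → ℝ) (J : Finset (Fin m))
    (hJ : ∑ i ∈ J, (v i) ^ 2 ≤ γ * ∑ i ∈ Jᶜ, (v i) ^ 2)
    (hsmall : ∀ i ∉ J, ∀ τ, 0 ≤ τ → τ ≤ 1 → |(y i + τ * v i) / σ| ≤ 1)
    (hstat : ∑ i, fspDeriv γ (y i / σ) * v i = 0) :
    Fsp γ σ (fun i => y i + v i) ≤ Fsp γ σ y := by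
  set g : ℝ → ℝ := fun τ => ∑ i, fsp γ ((y i + τ * v i) / σ) with hgdef
  set G : ℝ → ℝ := fun τ => ∑ i, fspDeriv γ ((y i + τ * v i) / σ) * (v i / σ) with hGdef
  have hg : ∀ τ : ℝ, HasDerivAt g (G τ) τ := by
    intro τ
    apply HasDerivAt.fun_sum
    intro i _
    have hinner : HasDerivAt (fun τ : ℝ => (y i + τ * v i) / σ) (v i / σ) τ :=
      (((hasDerivAt_mul_const (v i)).const_add (y i)).div_const σ)
    have houter := (hasDerivAt_fsp hγ ((y i + τ * v i) / σ)).comp τ hinner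
    exact houter
  have hcont : ContinuousOn g (Set.Icc 0 1) := by
    apply Continuous.continuousOn
    apply continuous_finset_sum
    intro i _
    exact (fsp_cont hγ).comp
      ((continuous_const.add (continuous_id.mul continuous_const)).div_const σ)
  have hG0 : G 0 = 0 := by
    rw [hGdef]
    simp only [zero_mul, add_zero]
    have heq : ∑ i, fspDeriv γ (y i / σ) * (v i / σ) =
        (∑ i, fspDeriv γ (y i / σ) * v i) / σ := by
      rw [Finset.sum_div]
      exact Finset.sum_congr rfl fun i _ => by ring
    rw [heq, hstat, zero_div]
  obtain ⟨cx, hcx, hslope⟩ := exists_hasDerivAt_eq_slope g G zero_lt_one hcont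
    (fun x _ => hg x)
  have hGc : G cx ≤ G 0 :=
    sum_deriv_diff_le hγ hσ y v J hJ (le_of_lt hcx.1)
      (fun i hiJ τ hτ0 hτc => hsmall i hiJ τ hτ0 (le_trans hτc hcx.2.le))
  have h10 : g 1 - g 0 ≤ 0 := by
    rw [sub_zero, div_one] at hslope
    rw [← hslope]
    rw [hG0] at hGc
    exact hGc
  have hg1 : g 1 = Fsp γ σ (fun i => y i + v i) := by
    rw [hgdef]
    unfold Fsp
    exact Finset.sum_congr rfl fun i _ => by rw [one_mul]
  have hg0 : g 0 = Fsp γ σ y := by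
    rw [hgdef]
    unfold Fsp
    exact Finset.sum_congr rfl fun i _ => by rw [zero_mul, add_zero]
  rw [hg1, hg0] at h10
  linarith

end SL0Aux8
noncomputable section SL0Aux9

open Filter Topology

private lemma flow_facts {n m : ℕ} (A : Matrix (Fin n) (Fin m) ℝ) {γ σ : ℝ}
    (hγ : 0 < γ) (hσ : 0 < σ)
    (P : (Fin m → ℝ) →ₗ[ℝ] (Fin m → ℝ))
    (hP1 : ∀ v, A.mulVec (P v) = 0)
    (hP2 : ∀ v, A.mulVec v = 0 → P v = v)
    (hP3 : ∀ v w : Fin m → ℝ, ∑ i, P v i * w i = ∑ i, v i * P w i)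
    (α0 : ℝ → Fin m → ℝ)
    (hd : ∀ t : ℝ, 0 ≤ t → HasDerivAt α0 (P (gradF γ σ (α0 t))) t)
    (slim : Fin m → ℝ) (hlim : Tendsto α0 atTop (nhds slim)) :
    Fsp γ σ (α0 0) ≤ Fsp γ σ slim ∧ P (gradF γ σ slim) = 0 ∧
      A.mulVec slim = A.mulVec (α0 0) := by
  have hFc : Continuous fun z : Fin m → ℝ => Fsp γ σ z := by
    apply continuous_finset_sum
    intro i _
    exact (fsp_cont hγ).comp ((continuous_apply (A := fun _ : Fin m => ℝ) i).div_const σ)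
  have hgradc : Continuous fun z : Fin m → ℝ => gradF γ σ z := by
    apply continuous_pi
    intro i
    exact ((fspDeriv_cont hγ).comp ((continuous_apply (A := fun _ : Fin m => ℝ) i).div_const σ)).div_const σ
  have hPc : Continuous fun z : Fin m → ℝ => P z := P.continuous_of_finiteDimensional
  have hnsqc : Continuous fun z : Fin m → ℝ => nsq z := by
    apply continuous_finset_sum
    intro i _
    exact (continuous_apply i).pow 2
  -- inner product identity
  have hsym : ∀ z : Fin m → ℝ,
      ∑ i, gradF γ σ z i * P (gradF γ σ z) i = nsq (P (gradF γ σ z)) := by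
    intro z
    have hidem : P (P (gradF γ σ z)) = P (gradF γ σ z) := hP2 _ (hP1 _)
    have h3 := hP3 (gradF γ σ z) (P (gradF γ σ z))
    rw [hidem] at h3
    rw [← h3]
    unfold nsq
    exact Finset.sum_congr rfl fun i _ => (sq (P (gradF γ σ z) i)).symm ▸ by ring
  -- derivative of Fsp along the flow
  set φ : ℝ → ℝ := fun t => Fsp γ σ (α0 t) with hφdef
  have hφd : ∀ t : ℝ, 0 ≤ t → HasDerivAt φ (nsq (P (gradF γ σ (α0 t)))) t := by
    intro t ht
    have hco : ∀ i : Fin m, HasDerivAt (fun u => α0 u i) (P (gradF γ σ (α0 t)) i) t :=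
      fun i => hasDerivAt_pi.mp (hd t ht) i
    have hsum : HasDerivAt (fun u => ∑ i, fsp γ (α0 u i / σ))
        (∑ i, fspDeriv γ (α0 t i / σ) * (P (gradF γ σ (α0 t)) i / σ)) t := by
      apply HasDerivAt.fun_sum
      intro i _
      exact (hasDerivAt_fsp hγ (α0 t i / σ)).comp t ((hco i).div_const σ)
    have hval : ∑ i, fspDeriv γ (α0 t i / σ) * (P (gradF γ σ (α0 t)) i / σ) =
        nsq (P (gradF γ σ (α0 t))) := by
      rw [← hsym (α0 t)]
      unfold gradF
      exact Finset.sum_congr rfl fun i _ => by ring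
    rw [hval] at hsum
    exact hsum
  have hφmono : MonotoneOn φ (Set.Ici 0) := by
    apply monotoneOn_of_deriv_nonneg (convex_Ici 0)
    · intro t ht
      exact (hφd t ht).continuousAt.continuousWithinAt
    · intro t ht
      rw [interior_Ici] at ht
      exact (hφd t (le_of_lt ht)).differentiableAt.differentiableWithinAt
    · intro t ht
      rw [interior_Ici] at ht
      rw [(hφd t (le_of_lt ht)).deriv]
      exact nsq_nonneg _
  have hφlim : Tendsto φ atTop (nhds (Fsp γ σ slim)) :=
    (hFc.tendsto slim).comp hlim
  have hφle : ∀ t : ℝ, 0 ≤ t → φ t ≤ (m : ℝ) := fun t _ => Fsp_le_m hγ σ (α0 t)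
  constructor
  · -- F(α0 0) ≤ F(slim)
    apply ge_of_tendsto hφlim
    filter_upwards [eventually_ge_atTop (0:ℝ)] with t ht
    exact hφmono (Set.self_mem_Ici) ht ht
  constructor
  · -- stationarity
    by_contra hne
    have hq : 0 < nsq (P (gradF γ σ slim)) := nsq_pos hne
    set q := nsq (P (gradF γ σ slim)) with hqdef
    have hΦc : Continuous fun z : Fin m → ℝ => nsq (P (gradF γ σ z)) :=
      hnsqc.comp (hPc.comp hgradc)
    have hU : {z : Fin m → ℝ | q / 2 < nsq (P (gradF γ σ z))} ∈ nhds slim := by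
      apply (isOpen_lt continuous_const hΦc).mem_nhds
      simp only [Set.mem_setOf_eq]
      linarith
    obtain ⟨T₁, hT₁⟩ := eventually_atTop.mp (hlim.eventually_mem hU)
    set T₀ : ℝ := max T₁ 0 with hT₀def
    have hT₀0 : (0:ℝ) ≤ T₀ := le_max_right _ _
    set ψ : ℝ → ℝ := fun t => φ t - q / 2 * t with hψdef
    have hψd : ∀ t : ℝ, 0 ≤ t →
        HasDerivAt ψ (nsq (P (gradF γ σ (α0 t))) - q / 2) t := by
      intro t ht
      have h2 : HasDerivAt (fun w : ℝ => q / 2 * w) (q / 2) t := by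
        simpa using (hasDerivAt_id t).const_mul (q / 2)
      exact (hφd t ht).sub h2
    have hψmono : MonotoneOn ψ (Set.Ici T₀) := by
      apply monotoneOn_of_deriv_nonneg (convex_Ici T₀)
      · intro t ht
        exact (hψd t (le_trans hT₀0 ht)).continuousAt.continuousWithinAt
      · intro t ht
        rw [interior_Ici] at ht
        exact (hψd t (le_trans hT₀0 ht.le)).differentiableAt.differentiableWithinAt
      · intro t ht
        rw [interior_Ici] at ht
        rw [(hψd t (le_trans hT₀0 ht.le)).deriv]
        have := hT₁ t (le_trans (le_max_left _ _) ht.le)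
        simp only [Set.mem_setOf_eq] at this
        linarith
    -- pick large t
    set tb : ℝ := T₀ + 2 / q * ((m : ℝ) + 1 - φ T₀) with htbdef
    have hφT₀m : φ T₀ ≤ (m : ℝ) := hφle T₀ hT₀0
    have htbge : T₀ ≤ tb := by
      rw [htbdef]
      have : 0 ≤ 2 / q * ((m : ℝ) + 1 - φ T₀) := by
        apply mul_nonneg (by positivity)
        linarith
      linarith
    have hψineq := hψmono (Set.self_mem_Ici) (Set.mem_Ici.mpr htbge) htbge
    rw [hψdef] at hψineq
    simp only at hψineq
    have hqne : q ≠ 0 := ne_of_gt hq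
    have hcalc : q / 2 * tb - q / 2 * T₀ = (m : ℝ) + 1 - φ T₀ := by
      rw [htbdef]
      field_simp
      ring
    have hφtb : φ tb ≤ (m : ℝ) := hφle tb (le_trans hT₀0 htbge)
    linarith
  · -- conservation of A-feasibility
    funext r
    set u : ℝ → ℝ := fun t => ∑ l, A r l * α0 t l with hudef
    have hud : ∀ t : ℝ, 0 ≤ t → HasDerivAt u 0 t := by
      intro t ht
      have hco : ∀ l : Fin m, HasDerivAt (fun w => α0 w l) (P (gradF γ σ (α0 t)) l) t :=
        fun l => hasDerivAt_pi.mp (hd t ht) l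
      have hsum : HasDerivAt u (∑ l, A r l * P (gradF γ σ (α0 t)) l) t := by
        rw [hudef]
        apply HasDerivAt.fun_sum
        intro l _
        exact (hco l).const_mul (A r l)
      have hz : ∑ l, A r l * P (gradF γ σ (α0 t)) l = 0 := by
        have := congrFun (hP1 (gradF γ σ (α0 t))) r
        simpa [Matrix.mulVec, dotProduct] using this
      rwa [hz] at hsum
    have humono : MonotoneOn u (Set.Ici 0) := by
      apply monotoneOn_of_deriv_nonneg (convex_Ici 0)
      · intro t ht
        exact (hud t ht).continuousAt.continuousWithinAt
      · intro t ht
        rw [interior_Ici] at ht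
        exact (hud t ht.le).differentiableAt.differentiableWithinAt
      · intro t ht
        rw [interior_Ici] at ht
        rw [(hud t ht.le).deriv]
    have huanti : AntitoneOn u (Set.Ici 0) := by
      apply antitoneOn_of_deriv_nonpos (convex_Ici 0)
      · intro t ht
        exact (hud t ht).continuousAt.continuousWithinAt
      · intro t ht
        rw [interior_Ici] at ht
        exact (hud t ht.le).differentiableAt.differentiableWithinAt
      · intro t ht
        rw [interior_Ici] at ht
        rw [(hud t ht.le).deriv]
    have huconst : ∀ t : ℝ, 0 ≤ t → u t = u 0 := by
      intro t ht
      have h1 := humono Set.self_mem_Ici (Set.mem_Ici.mpr ht) ht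
      have h2 := huanti Set.self_mem_Ici (Set.mem_Ici.mpr ht) ht
      linarith
    have hulim : Tendsto u atTop (nhds (∑ l, A r l * slim l)) := by
      have hucont : Continuous fun z : Fin m → ℝ => ∑ l, A r l * z l := by
        apply continuous_finset_sum
        intro l _
        exact continuous_const.mul (continuous_apply l)
      exact (hucont.tendsto slim).comp hlim
    have hulim0 : Tendsto u atTop (nhds (u 0)) := by
      apply Tendsto.congr' _ tendsto_const_nhds
      filter_upwards [eventually_ge_atTop (0:ℝ)] with t ht
      exact (huconst t ht).symm
    have := tendsto_nhds_unique hulim hulim0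
    have hl : (A.mulVec slim) r = ∑ l, A r l * slim l := by
      simp [Matrix.mulVec, dotProduct]
    have hr : (A.mulVec (α0 0)) r = u 0 := by
      simp [hudef, Matrix.mulVec, dotProduct]
    rw [hl, hr, this]

end SL0Aux9
open Filter Topology in
set_option maxHeartbeats 4000000 in
theorem stmt_13' {n m : ℕ} (hnm : n < m) (A : Matrix (Fin n) (Fin m) ℝ)
    (hURP : URP A) (horth : A * A.transpose = 1)
    (n0 : ℕ) (hn1 : 1 ≤ n0) (hn0 : n0 ≤ n)
    (γ : ℝ) (hγ : γ = gammaA A n0) (hγpos : 0 < γ) (hbdd : BddAbove (gammaSet A n0))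
    (x : Fin n → ℝ) (s0 : Fin m → ℝ) (hs0x : A.mulVec s0 = x)
    (k : ℕ) (hk : k = l0 s0) (hkpos : 0 < k) (hksp : (k : ℝ) < n0 / (2 + 2 * γ))
    (shat : Fin m → ℝ) (hshat : shat = A.transpose.mulVec x)
    (σ1 c : ℝ)
    (hσ1 : σ1 = Real.sqrt (nsq shat) / Real.sqrt (k * (1 + γ)))
    (hc : c = 2 * m / (2 * m + n0 / (2 + 2 * γ) - k))
    (σs : ℕ → ℝ) (hσs : ∀ j : ℕ, σs j = σ1 * c ^ (j - 1))
    (P : (Fin m → ℝ) →ₗ[ℝ] (Fin m → ℝ))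
    (hP1 : ∀ v, A.mulVec (P v) = 0)
    (hP2 : ∀ v, A.mulVec v = 0 → P v = v)
    (hP3 : ∀ v w : Fin m → ℝ, ∑ i, P v i * w i = ∑ i, v i * P w i)
    (s : ℕ → Fin m → ℝ) (hs1 : s 1 = shat)
    (α : ℕ → ℝ → Fin m → ℝ)
    (hα0 : ∀ j : ℕ, 2 ≤ j → α j 0 = s (j - 1))
    (hαd : ∀ j : ℕ, 2 ≤ j → ∀ t : ℝ, 0 ≤ t →
      HasDerivAt (α j) (P (gradF γ (σs j) (α j t))) t)
    (hαlim : ∀ j : ℕ, 2 ≤ j → Filter.Tendsto (α j) Filter.atTop (nhds (s j))) :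
    (∀ j : ℕ, 1 ≤ j →
      (m : ℝ) - k ≤ Fsp γ (σs j) (s j) ∧
      Real.sqrt (nsq (s j - s0)) ≤ Real.sqrt (m * (γ + 1)) * σs j) ∧
    Filter.Tendsto s Filter.atTop (nhds s0) := by
  classical
  have hγ2 : (0:ℝ) < 2 + 2 * γ := by linarith
  have hone : (0:ℝ) < 1 + γ := by linarith
  have hmpos : (0:ℝ) < (m : ℝ) := by
    have : 0 < m := lt_of_le_of_lt (Nat.zero_le n) hnm
    exact_mod_cast this
  have hn0m : (n0 : ℝ) ≤ (m : ℝ) := by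
    have : n0 ≤ m := le_trans hn0 hnm.le
    exact_mod_cast this
  have hnm' : n ≤ m := hnm.le
  set r : ℝ := (n0 : ℝ) / (2 + 2 * γ) with hrdef
  have hkr : (k : ℝ) < r := hksp
  have hkpos' : (0:ℝ) < (k : ℝ) := by exact_mod_cast hkpos
  have hn0nonneg : (0:ℝ) ≤ (n0 : ℝ) := Nat.cast_nonneg n0
  have hrhalf : r ≤ (n0 : ℝ) / 2 := by
    rw [hrdef]
    apply div_le_div_of_nonneg_left hn0nonneg (by norm_num) (by linarith)
  have hrm2 : r ≤ (m : ℝ) / 2 := le_trans hrhalf (by linarith)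
  have hδpos : 0 < r - (k : ℝ) := by linarith
  have hcden : (0:ℝ) < 2 * (m : ℝ) + r - (k : ℝ) := by nlinarith
  have hcpos : 0 < c := by
    rw [hc]
    exact div_pos (by positivity) hcden
  have hclt1 : c < 1 := by
    rw [hc, div_lt_one hcden]
    linarith
  have hcle1 : c ≤ 1 := hclt1.le
  -- k / c^2 ≤ r
  have hkc2 : (k : ℝ) / c ^ 2 ≤ r := by
    have hkm2 : (k : ℝ) ≤ (m : ℝ) / 2 := le_trans hkr.le hrm2
    have inner : 0 ≤ 4 * (m:ℝ) * ((m:ℝ) - (k:ℝ)) - (k:ℝ) * (r - (k:ℝ)) := by nlinarith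
    have hkey : (k : ℝ) * (2 * (m:ℝ) + r - (k:ℝ)) ^ 2 ≤ r * (2 * (m:ℝ)) ^ 2 := by
      nlinarith [mul_nonneg hδpos.le inner]
    have hc2 : c ^ 2 = (2 * (m:ℝ)) ^ 2 / (2 * (m:ℝ) + r - (k:ℝ)) ^ 2 := by
      rw [hc, div_pow]
    rw [hc2, div_div_eq_mul_div, div_le_iff₀ (by positivity)]
    calc (k:ℝ) * (2 * (m:ℝ) + r - (k:ℝ)) ^ 2 ≤ r * (2 * (m:ℝ)) ^ 2 := hkey
      _ = r * ((2 * (m:ℝ)) ^ 2) := by ring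
  have hγr : (1 + γ) * r = (n0 : ℝ) / 2 := by
    rw [hrdef]
    field_simp
  have hkn0half : (k : ℝ) ≤ (n0 : ℝ) / 2 := le_trans hkr.le hrhalf
  -- σ1 positivity
  have hx0 : A.mulVec shat = x := by
    rw [hshat, Matrix.mulVec_mulVec, horth, Matrix.one_mulVec]
  have hkn0nat : k ≤ n0 := by
    have : (k : ℝ) < (n0 : ℝ) := lt_of_lt_of_le hkr (by linarith)
    exact_mod_cast this.le
  have hshat0 : shat ≠ 0 := by
    intro hz
    have hxz : x = 0 := by rw [← hx0, hz, Matrix.mulVec_zero]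
    have hs00 : A.mulVec s0 = 0 := by rw [hs0x, hxz]
    have hkn : (Finset.univ.filter fun i => s0 i ≠ 0).card ≤ n := by
      have h1 : (Finset.univ.filter fun i => s0 i ≠ 0).card = k := by rw [hk]; rfl
      rw [h1]
      exact le_trans hkn0nat hn0
    have hs0z := urp_null hURP hnm' hs00 hkn
    rw [hs0z] at hk
    simp [l0] at hk
    omega
  have hnsqpos : 0 < nsq shat := nsq_pos hshat0
  have hkγpos : (0:ℝ) < (k : ℝ) * (1 + γ) := mul_pos hkpos' hone
  have hσ1pos : 0 < σ1 := by
    rw [hσ1]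
    exact div_pos (Real.sqrt_pos.mpr hnsqpos) (Real.sqrt_pos.mpr hkγpos)
  have hσ1sq : σ1 ^ 2 = nsq shat / ((k : ℝ) * (1 + γ)) := by
    rw [hσ1, div_pow, Real.sq_sqrt (nsq_nonneg shat), Real.sq_sqrt hkγpos.le]
  have hσpos : ∀ j : ℕ, 0 < σs j := by
    intro j
    rw [hσs j]
    exact mul_pos hσ1pos (pow_pos hcpos _)
  have hσsucc : ∀ j : ℕ, 1 ≤ j → σs (j + 1) = c * σs j := by
    intro j hj
    rw [hσs, hσs]
    have he : j + 1 - 1 = (j - 1) + 1 := by omega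
    rw [he, pow_succ]
    ring
  -- main induction
  have key : ∀ j : ℕ, 1 ≤ j →
      ((m : ℝ) - k ≤ Fsp γ (σs j) (s j) ∧ A.mulVec (s j) = x) := by
    intro j hj
    induction j, hj using Nat.le_induction with
    | base =>
      constructor
      · have hσs1 : σs 1 = σ1 := by
          rw [hσs]
          norm_num
        rw [hσs1, hs1]
        have hd := defect_le_nsq hγpos hσ1pos shat
        have heqk : nsq shat / (σ1 ^ 2 * (1 + γ)) = (k : ℝ) := by
          rw [hσ1sq]
          field_simp
        rw [heqk] at hd
        linarith
      · rw [hs1]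
        exact hx0
    | succ j hj ih =>
      obtain ⟨ihF, ihA⟩ := ih
      have h2j : 2 ≤ j + 1 := by omega
      have hα00 : α (j + 1) 0 = s j := by
        have h := hα0 (j + 1) h2j
        rwa [Nat.add_sub_cancel] at h
      have hflow := flow_facts A hγpos (hσpos (j + 1)) P hP1 hP2 hP3 (α (j + 1))
        (fun t ht => hαd (j + 1) h2j t ht) (s (j + 1)) (hαlim (j + 1) h2j)
      obtain ⟨hF1, hstatP, hAcons⟩ := hflow
      rw [hα00] at hF1 hAcons
      have hAnew : A.mulVec (s (j + 1)) = x := by rw [hAcons, ihA]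
      have hscale : (m : ℝ) - Fsp γ (σs (j + 1)) (s j) ≤
          ((m : ℝ) - Fsp γ (σs j) (s j)) / c ^ 2 := by
        rw [hσsucc j hj]
        exact Fsp_scale hγpos hcpos hcle1 (σs j) (hσpos j) (s j)
      have hdef1 : (m : ℝ) - Fsp γ (σs (j + 1)) (s j) ≤ (k : ℝ) / c ^ 2 :=
        le_trans hscale ((div_le_div_iff_of_pos_right (by positivity)).mpr (by linarith))
      have hdefnew : (m : ℝ) - Fsp γ (σs (j + 1)) (s (j + 1)) ≤ r := by
        have h1 : (m : ℝ) - Fsp γ (σs (j + 1)) (s (j + 1)) ≤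
            (m : ℝ) - Fsp γ (σs (j + 1)) (s j) := by linarith
        linarith
      set T := Finset.univ.filter fun i => s0 i ≠ 0 with hTdef
      set Bg := Finset.univ.filter fun i => σs (j + 1) ≤ |s (j + 1) i| with hBdef
      set J := T ∪ Bg with hJdef
      have hTk : (T.card : ℝ) = (k : ℝ) := by
        have : T.card = k := by rw [hk]; rfl
        exact_mod_cast this
      have hJcard : (J.card : ℝ) ≤ (n0 : ℝ) := by
        have h1 : (J.card : ℝ) ≤ (T.card : ℝ) + (Bg.card : ℝ) := by
          exact_mod_cast Finset.card_union_le T Bg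
        have h2 : (Bg.card : ℝ) ≤ (1 + γ) * ((m : ℝ) - Fsp γ (σs (j + 1)) (s (j + 1))) :=
          count_ge hγpos (hσpos (j + 1)) _
        have h3 : (1 + γ) * ((m : ℝ) - Fsp γ (σs (j + 1)) (s (j + 1))) ≤ (1 + γ) * r :=
          mul_le_mul_of_nonneg_left hdefnew (by linarith)
        rw [hγr] at h3
        rw [hTk] at h1
        linarith
      have hJcardN : J.card ≤ n0 := by exact_mod_cast hJcard
      have hvnull : A.mulVec (s0 - s (j + 1)) = 0 := by
        rw [Matrix.mulVec_sub, hs0x, hAnew, sub_self]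
      have hγineq := gamma_bound hURP hγ hbdd hn0 hnm' hvnull J hJcardN
      have hsmall : ∀ i ∉ J, ∀ τ, 0 ≤ τ → τ ≤ 1 →
          |(s (j + 1) i + τ * (s0 - s (j + 1)) i) / σs (j + 1)| ≤ 1 := by
        intro i hiJ τ hτ0 hτ1
        rw [hJdef, Finset.mem_union] at hiJ
        push_neg at hiJ
        have hs0i : s0 i = 0 := by
          have := hiJ.1
          rw [hTdef, Finset.mem_filter] at this
          push_neg at this
          by_contra hne
          exact hne (this (Finset.mem_univ i))
        have habsi : |s (j + 1) i| < σs (j + 1) := by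
          have := hiJ.2
          rw [hBdef, Finset.mem_filter] at this
          push_neg at this
          exact this (Finset.mem_univ i)
        have hval : s (j + 1) i + τ * (s0 - s (j + 1)) i = (1 - τ) * s (j + 1) i := by
          simp only [Pi.sub_apply, hs0i]
          ring
        rw [hval, abs_div, abs_of_pos (hσpos (j + 1)), div_le_one (hσpos (j + 1)),
          abs_mul, abs_of_nonneg (by linarith : (0:ℝ) ≤ 1 - τ)]
        calc (1 - τ) * |s (j + 1) i| ≤ 1 * |s (j + 1) i| :=
              mul_le_mul_of_nonneg_right (by linarith) (abs_nonneg _)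
          _ ≤ σs (j + 1) := by rw [one_mul]; exact habsi.le
      have hstatsum : ∑ i, fspDeriv γ (s (j + 1) i / σs (j + 1)) * (s0 - s (j + 1)) i = 0 := by
        have hPv : P (s0 - s (j + 1)) = s0 - s (j + 1) := hP2 _ hvnull
        have h3 := hP3 (gradF γ (σs (j + 1)) (s (j + 1))) (s0 - s (j + 1))
        rw [hPv, hstatP] at h3
        have h4 : ∑ i, gradF γ (σs (j + 1)) (s (j + 1)) i * (s0 - s (j + 1)) i = 0 := by
          rw [← h3]
          simp
        have hne : σs (j + 1) ≠ 0 := (hσpos (j + 1)).ne'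
        have h5 : ∑ i, fspDeriv γ (s (j + 1) i / σs (j + 1)) * (s0 - s (j + 1)) i =
            σs (j + 1) * ∑ i, gradF γ (σs (j + 1)) (s (j + 1)) i * (s0 - s (j + 1)) i := by
          rw [Finset.mul_sum]
          apply Finset.sum_congr rfl
          intro i _
          unfold gradF
          rw [← mul_assoc, mul_comm (σs (j + 1)) _, div_mul_cancel₀ _ hne]
        rw [h5, h4, mul_zero]
      have hstatge := stationary_ge hγpos (hσpos (j + 1)) (s (j + 1)) (s0 - s (j + 1)) J
        hγineq hsmall hstatsum
      have hs0eq : (fun i => s (j + 1) i + (s0 - s (j + 1)) i) = s0 := by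
        funext i
        simp
      rw [hs0eq] at hstatge
      exact ⟨le_trans (Fsp_s0_ge hγpos (σs (j + 1)) hk) hstatge, hAnew⟩
  -- ball bounds
  have ball : ∀ j : ℕ, 1 ≤ j → nsq (s j - s0) ≤ (m : ℝ) * (1 + γ) * (σs j) ^ 2 := by
    intro j hj
    obtain ⟨hF, hA⟩ := key j hj
    apply ball_bound hURP hγ hγpos hbdd hn0 hnm' hs0x hk (hσpos j) hA
      (β := (k : ℝ)) (by linarith)
    nlinarith [hkr, hγ2, hkpos']
  have sqrtball : ∀ j : ℕ, 1 ≤ j →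
      Real.sqrt (nsq (s j - s0)) ≤ Real.sqrt ((m : ℝ) * (γ + 1)) * σs j := by
    intro j hj
    have h1 := Real.sqrt_le_sqrt (ball j hj)
    have h2 : Real.sqrt ((m : ℝ) * (1 + γ) * (σs j) ^ 2) =
        Real.sqrt ((m : ℝ) * (γ + 1)) * σs j := by
      rw [show (m : ℝ) * (1 + γ) * (σs j) ^ 2 = (m : ℝ) * (γ + 1) * (σs j) ^ 2 by ring]
      rw [Real.sqrt_mul (by positivity) ((σs j) ^ 2), Real.sqrt_sq (hσpos j).le]
    rw [← h2]
    exact h1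
  refine ⟨fun j hj => ⟨(key j hj).1, sqrtball j hj⟩, ?_⟩
  rw [tendsto_pi_nhds]
  intro i
  have hdiff : Tendsto (fun j : ℕ => s j i - s0 i) atTop (nhds 0) := by
    apply squeeze_zero_norm' (a := fun j : ℕ =>
      Real.sqrt ((m : ℝ) * (γ + 1)) * σ1 / c * c ^ j)
    · filter_upwards [eventually_ge_atTop 1] with j hj
      have h1 : |s j i - s0 i| ≤ Real.sqrt (nsq (s j - s0)) := by
        have := abs_comp_le_sqrt_nsq (s j - s0) i
        simpa using this
      have h2 := sqrtball j hj
      have h3 : σs j = σ1 * c ^ (j - 1) := hσs j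
      have h4 : c ^ (j - 1) = c ^ j / c := by
        rw [eq_div_iff (ne_of_gt hcpos), ← pow_succ]
        congr 1
        omega
      rw [Real.norm_eq_abs]
      calc |s j i - s0 i| ≤ Real.sqrt ((m : ℝ) * (γ + 1)) * σs j := le_trans h1 h2
        _ = Real.sqrt ((m : ℝ) * (γ + 1)) * σ1 / c * c ^ j := by
            rw [h3, h4]
            field_simp
    · have := (tendsto_pow_atTop_nhds_zero_of_lt_one hcpos.le hclt1).const_mul
        (Real.sqrt ((m : ℝ) * (γ + 1)) * σ1 / c)
      simpa using this
  have := hdiff.add (tendsto_const_nhds (x := s0 i) (f := atTop))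
  simpa using this

/-- convergence of asymptotic SL0 with the geometric σ-sequence
σ_j = σ₁ c^{j−1}: each outer iterate satisfies F_{γ,σ_j}(s_j) ≥ m − k and
‖s_j − s0‖ ≤ √(m(γ+1))σ_j, so s_j → s0. -/
theorem stmt_13 {n m : ℕ} (hnm : n < m) (A : Matrix (Fin n) (Fin m) ℝ)
    (hURP : URP A) (horth : A * A.transpose = 1)
    (n0 : ℕ) (hn1 : 1 ≤ n0) (hn0 : n0 ≤ n)
    (γ : ℝ) (hγ : γ = gammaA A n0) (hγpos : 0 < γ) (hbdd : BddAbove (gammaSet A n0))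
    (x : Fin n → ℝ) (s0 : Fin m → ℝ) (hs0x : A.mulVec s0 = x)
    (k : ℕ) (hk : k = l0 s0) (hkpos : 0 < k) (hksp : (k : ℝ) < n0 / (2 + 2 * γ))
    (shat : Fin m → ℝ) (hshat : shat = A.transpose.mulVec x)
    (σ1 c : ℝ)
    (hσ1 : σ1 = Real.sqrt (nsq shat) / Real.sqrt (k * (1 + γ)))
    (hc : c = 2 * m / (2 * m + n0 / (2 + 2 * γ) - k))
    (σs : ℕ → ℝ) (hσs : ∀ j : ℕ, σs j = σ1 * c ^ (j - 1))
    (P : (Fin m → ℝ) →ₗ[ℝ] (Fin m → ℝ))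
    (hP1 : ∀ v, A.mulVec (P v) = 0)
    (hP2 : ∀ v, A.mulVec v = 0 → P v = v)
    (hP3 : ∀ v w : Fin m → ℝ, ∑ i, P v i * w i = ∑ i, v i * P w i)
    (s : ℕ → Fin m → ℝ) (hs1 : s 1 = shat)
    (α : ℕ → ℝ → Fin m → ℝ)
    (hα0 : ∀ j : ℕ, 2 ≤ j → α j 0 = s (j - 1))
    (hαd : ∀ j : ℕ, 2 ≤ j → ∀ t : ℝ, 0 ≤ t →
      HasDerivAt (α j) (P (gradF γ (σs j) (α j t))) t)
    (hαlim : ∀ j : ℕ, 2 ≤ j → Filter.Tendsto (α j) Filter.atTop (nhds (s j))) :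
    (∀ j : ℕ, 1 ≤ j →
      (m : ℝ) - k ≤ Fsp γ (σs j) (s j) ∧
      Real.sqrt (nsq (s j - s0)) ≤ Real.sqrt (m * (γ + 1)) * σs j) ∧
    Filter.Tendsto s Filter.atTop (nhds s0) := stmt_13' hnm A hURP horth n0 hn1 hn0 γ hγ hγpos hbdd x s0 hs0x k hk hkpos hksp
    shat hshat σ1 c hσ1 hc σs hσs P hP1 hP2 hP3 s hs1 α hα0 hαd hαlim
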